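/- Let d ∈ ℕ and let p be the partition of {1,…,d} whose classes are the singletons {1},…,{m} together with {m+1,…,d} (for m ≤ d), and similarly q with parameter n ≤ d. Then the double cosets S_p\S_d/S_q are in bijection with the set of partial bijections between {1,…,m} and {1,…,n} whose 'total size' m + n − (number of matched pairs) is at most d; equivalently, with recollements r of I = {1,…,m} and J = {1,…,n} satisfying #r ≤ d. -/

import Mathlib

/-- A recollement of `I` and `J`: an equivalence relation on `I ⊔ J` whose
classes contain at most one element of `I` and at most one element of `J`. -/
def IsRecollement {I J : Type*} (r : Setoid (I ⊕ J)) : Prop :=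
  (∀ i i' : I, r (Sum.inl i) (Sum.inl i') → i = i') ∧
  (∀ j j' : J, r (Sum.inr j) (Sum.inr j') → j = j')

/-- The partition of `{1,…,d}` whose classes are the singletons
`{1},…,{m}` together with the block `{m+1,…,d}`. -/
def youngSetoid (d m : ℕ) : Setoid (Fin d) :=
  ⟨fun a b => a = b ∨ (m ≤ (a : ℕ) ∧ m ≤ (b : ℕ)),
    ⟨fun _ => Or.inl rfl,
     fun h => h.elim (fun e => Or.inl e.symm) (fun h => Or.inr ⟨h.2, h.1⟩),
     by
      rintro a b c (rfl | h1) h2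
      · exact h2
      · rcases h2 with rfl | h2
        · exact Or.inr h1
        · exact Or.inr ⟨h1.1, h2.2⟩⟩⟩

/-- The Young subgroup `S_p` attached to a partition `p`. -/
def youngSubgroup {X : Type*} (p : Setoid X) : Subgroup (Equiv.Perm X) where
  carrier := {g : Equiv.Perm X | ∀ x : X, p x (g x)}
  one_mem' := fun x => p.refl x
  mul_mem' := by
    intro g h hg hh x
    exact p.trans (hh x) (hg (h x))
  inv_mem' := by
    intro g hg x
    have := hg (g⁻¹ x)
    simp only [Equiv.Perm.inv_def, Equiv.apply_symm_apply] at this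
    exact p.symm this

namespace DER
open Equiv

variable {d m n : ℕ}

/-- the matching relation attached to a permutation -/
def rel (hm : m ≤ d) (hn : n ≤ d) (g : Equiv.Perm (Fin d)) :
    (Fin m ⊕ Fin n) → (Fin m ⊕ Fin n) → Prop
  | Sum.inl i, Sum.inl i' => i = i'
  | Sum.inr j, Sum.inr j' => j = j'
  | Sum.inl i, Sum.inr j => g (Fin.castLE hn j) = Fin.castLE hm i
  | Sum.inr j, Sum.inl i => g (Fin.castLE hn j) = Fin.castLE hm i

def rSetoid (hm : m ≤ d) (hn : n ≤ d) (g : Equiv.Perm (Fin d)) : Setoid (Fin m ⊕ Fin n) where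
  r := rel hm hn g
  iseqv := by
    constructor
    · rintro (i | j) <;> rfl
    · rintro (i | j) (i' | j') h <;> simp only [rel] at * <;> [exact h.symm; exact h; exact h;
        exact h.symm]
    · rintro (i | j) (i' | j') (i'' | j'') h1 h2 <;> simp only [rel] at *
      · exact h1.trans h2
      · rw [h1]; exact h2
      · exact Fin.castLE_injective hm (h1.symm.trans h2)
      · exact h2 ▸ h1
      · rw [← h2]; exact h1
      · exact Fin.castLE_injective hn (g.injective (h1.trans h2.symm))
      · rw [h1]; exact h2
      · exact h1.trans h2

lemma mem_young_iff {k : ℕ} {h : Equiv.Perm (Fin d)} :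
    h ∈ youngSubgroup (youngSetoid d k) ↔ ∀ x : Fin d, x = h x ∨ (k ≤ (x : ℕ) ∧ k ≤ ((h x) : ℕ)) :=
  Iff.rfl

lemma young_fix {k : ℕ} {h : Equiv.Perm (Fin d)} (hh : h ∈ youngSubgroup (youngSetoid d k))
    {x : Fin d} (hx : (x : ℕ) < k) : h x = x := by
  rcases hh x with e | ⟨h1, _⟩
  · exact e.symm
  · omega

lemma young_le {k : ℕ} {h : Equiv.Perm (Fin d)} (hh : h ∈ youngSubgroup (youngSetoid d k))
    {x : Fin d} (hx : k ≤ (x : ℕ)) : k ≤ ((h x) : ℕ) := by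
  rcases hh x with e | ⟨_, h2⟩
  · omega
  · exact h2

lemma matched_iff {hm : m ≤ d} {hn : n ≤ d} {h g k : Equiv.Perm (Fin d)}
    (hh : h ∈ youngSubgroup (youngSetoid d m)) (hk : k ∈ youngSubgroup (youngSetoid d n))
    (i : Fin m) (j : Fin n) :
    (h * g * k) (Fin.castLE hn j) = Fin.castLE hm i ↔ g (Fin.castLE hn j) = Fin.castLE hm i := by
  have hkj : k (Fin.castLE hn j) = Fin.castLE hn j := young_fix hk (by simp [j.isLt])
  have hmul : (h * g * k) (Fin.castLE hn j) = h (g (Fin.castLE hn j)) := by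
    simp [Equiv.Perm.mul_apply, hkj]
  rw [hmul]
  constructor
  · intro he
    by_cases hlt : ((g (Fin.castLE hn j)) : ℕ) < m
    · rw [young_fix hh hlt] at he; exact he
    · exfalso
      have := young_le hh (le_of_not_gt hlt)
      rw [he] at this
      simp only [Fin.coe_castLE] at this
      omega
  · intro he
    rw [he, young_fix hh (by simp [i.isLt])]

lemma rSetoid_doset {hm : m ≤ d} {hn : n ≤ d} {h g k : Equiv.Perm (Fin d)}
    (hh : h ∈ youngSubgroup (youngSetoid d m)) (hk : k ∈ youngSubgroup (youngSetoid d n)) :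
    rSetoid hm hn (h * g * k) = rSetoid hm hn g := by
  apply Setoid.ext
  rintro (i | j) (i' | j') <;>
    show rel hm hn _ _ _ ↔ rel hm hn _ _ _ <;> simp only [rel] <;> rw [matched_iff hh hk]

lemma isRecollement_rSetoid (hm : m ≤ d) (hn : n ≤ d) (g : Equiv.Perm (Fin d)) :
    IsRecollement (rSetoid hm hn g) :=
  ⟨fun _ _ h => h, fun _ _ h => h⟩

lemma card_rSetoid_le (hm : m ≤ d) (hn : n ≤ d) (g : Equiv.Perm (Fin d)) :
    Nat.card (Quotient (rSetoid hm hn g)) ≤ d := by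
  have resp : ∀ a b, rel hm hn g a b →
      (Sum.elim (Fin.castLE hm) (fun j => g (Fin.castLE hn j)) a : Fin d) =
      Sum.elim (Fin.castLE hm) (fun j => g (Fin.castLE hn j)) b := by
    rintro (i | j) (i' | j') hab <;> simp only [rel] at hab <;> simp [hab]
  set F : Quotient (rSetoid hm hn g) → Fin d :=
    Quotient.lift _ resp with hF
  have hinj : Function.Injective F := by
    rintro ⟨a⟩ ⟨b⟩ hab
    refine Quotient.sound ?_
    revert hab
    rcases a with i | j <;> rcases b with i' | j' <;>
      simp only [hF, Quotient.lift_mk, Sum.elim_inl, Sum.elim_inr] <;> intro hab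
    · exact Fin.castLE_injective hm hab
    · exact hab.symm
    · exact hab
    · exact Fin.castLE_injective hn (g.injective hab)
  calc Nat.card (Quotient (rSetoid hm hn g)) ≤ Nat.card (Fin d) :=
        Nat.card_le_card_of_injective F hinj
    _ = d := by simp

/-- the descended map on double cosets -/
noncomputable def toRec (hm : m ≤ d) (hn : n ≤ d) :
    DoubleCoset.Quotient ((youngSubgroup (youngSetoid d m) : Subgroup (Equiv.Perm (Fin d))) :
        Set (Equiv.Perm (Fin d)))
      ((youngSubgroup (youngSetoid d n) : Subgroup (Equiv.Perm (Fin d))) :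
        Set (Equiv.Perm (Fin d))) →
    {r : Setoid (Fin m ⊕ Fin n) // IsRecollement r ∧ Nat.card (Quotient r) ≤ d} :=
  Quotient.lift
    (fun g => (⟨rSetoid hm hn g, isRecollement_rSetoid hm hn g, card_rSetoid_le hm hn g⟩ :
      {r : Setoid (Fin m ⊕ Fin n) // IsRecollement r ∧ Nat.card (Quotient r) ≤ d}))
    (by
      intro a b hab
      obtain ⟨h, hh, k, hk, rfl⟩ := DoubleCoset.rel_iff.mp hab
      exact Subtype.ext (rSetoid_doset hh hk).symm)

lemma exists_perm_extend (hn : n ≤ d) (u : Fin n → Fin d) (hu : Function.Injective u) :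
    ∃ g : Equiv.Perm (Fin d), ∀ j, g (Fin.castLE hn j) = u j := by
  classical
  set p : Fin d → Prop := fun x => (x : ℕ) < n with hp
  set q : Fin d → Prop := fun x => ∃ j, u j = x with hq
  have hbij : Function.Bijective
      (fun x : {x // p x} => (⟨u ⟨x.1, x.2⟩, ⟨_, rfl⟩⟩ : {x // q x})) := by
    constructor
    · rintro ⟨x, hx⟩ ⟨y, hy⟩ hxy
      have h3 := hu (Subtype.ext_iff.mp hxy)
      exact Subtype.ext (Fin.val_injective (congrArg (fun t : Fin n => (t : ℕ)) h3))
    · rintro ⟨x, j, rfl⟩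
      refine ⟨⟨Fin.castLE hn j, j.isLt⟩, Subtype.ext ?_⟩
      show u ⟨((Fin.castLE hn j : Fin d) : ℕ), _⟩ = u j
      exact congrArg u (Fin.ext rfl)
  set e : {x // p x} ≃ {x // q x} := Equiv.ofBijective _ hbij with he
  refine ⟨e.extendSubtype, fun j => ?_⟩
  have hpj : p (Fin.castLE hn j) := j.isLt
  rw [Equiv.extendSubtype_apply_of_mem e _ hpj]
  show u ⟨((Fin.castLE hn j : Fin d) : ℕ), hpj⟩ = u j
  exact congrArg u (Fin.ext rfl)

lemma exists_perm_of_rec (hm : m ≤ d) (hn : n ≤ d) (r : Setoid (Fin m ⊕ Fin n))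
    (hr : IsRecollement r) (hcard : Nat.card (Quotient r) ≤ d) :
    ∃ g : Equiv.Perm (Fin d), rSetoid hm hn g = r := by
  classical
  -- unmatched elements of `Fin n`
  set U := {j : Fin n // ∀ i : Fin m, ¬ r (Sum.inl i) (Sum.inr j)} with hU
  -- counting : m + card U ≤ d
  have hWinj : Function.Injective
      (Sum.elim (fun i : Fin m => (⟦Sum.inl i⟧ : Quotient r))
        (fun j : U => ⟦Sum.inr j.1⟧)) := by
    rintro (i | j) (i' | j') hab <;>
      simp only [Sum.elim_inl, Sum.elim_inr, Quotient.eq] at hab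
    · exact congrArg Sum.inl (hr.1 i i' hab)
    · exact absurd hab (j'.2 i)
    · exact absurd (Setoid.symm hab) (j.2 i')
    · exact congrArg Sum.inr (Subtype.ext (hr.2 j.1 j'.1 hab))
  have hcount : m + Nat.card U ≤ d := by
    have h1 := Nat.card_le_card_of_injective _ hWinj
    rw [Nat.card_sum] at h1
    have h2 : Nat.card (Fin m) = m := by simp
    rw [h2] at h1
    exact h1.trans hcard
  -- an embedding of U into the tail {x // m ≤ x}
  have hcardtail : Fintype.card U ≤ Fintype.card {x : Fin d // m ≤ (x : ℕ)} := by
    have h0 : Fintype.card {x : Fin d // ((x : ℕ) < m)} = m :=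
      Fintype.card_congr
        (⟨fun x => ⟨(x.1 : ℕ), x.2⟩, fun i => ⟨⟨(i : ℕ), lt_of_lt_of_le i.2 hm⟩, i.2⟩,
          fun x => Subtype.ext (Fin.ext rfl), fun i => Fin.ext rfl⟩ :
          {x : Fin d // (x : ℕ) < m} ≃ Fin m) |>.trans (Fintype.card_fin m)
    have h1 : Fintype.card {x : Fin d // m ≤ (x : ℕ)} = d - m := by
      have h2 : Fintype.card {x : Fin d // ¬ ((x : ℕ) < m)} = d - m := by
        rw [Fintype.card_subtype_compl, h0, Fintype.card_fin]
      rw [← h2]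
      exact Fintype.card_congr (Equiv.subtypeEquivRight (fun x => by omega))
    rw [h1, ← Nat.card_eq_fintype_card]
    omega
  obtain ⟨emb⟩ := Function.Embedding.nonempty_iff_card_le.mpr hcardtail
  -- the function sending j to its match, or to an unused tail element
  set u : Fin n → Fin d := fun j =>
    if h : ∃ i : Fin m, r (Sum.inl i) (Sum.inr j) then Fin.castLE hm h.choose
    else (emb ⟨j, fun i hi => h ⟨i, hi⟩⟩ : {x : Fin d // m ≤ (x : ℕ)}).1 with hu
  -- uniqueness of matches
  have huniq : ∀ (j : Fin n) (h : ∃ i : Fin m, r (Sum.inl i) (Sum.inr j)) (i : Fin m),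
      r (Sum.inl i) (Sum.inr j) → i = h.choose := by
    intro j h i hi
    exact hr.1 i h.choose (Setoid.trans hi (Setoid.symm h.choose_spec))
  have huinj : Function.Injective u := by
    intro j j' hjj
    by_cases h : ∃ i : Fin m, r (Sum.inl i) (Sum.inr j) <;>
      by_cases h' : ∃ i : Fin m, r (Sum.inl i) (Sum.inr j') <;>
      simp only [hu, h, h', dif_pos, dif_neg, not_false_iff] at hjj
    · have heq : h.choose = h'.choose := Fin.castLE_injective hm hjj
      exact hr.2 j j' (Setoid.trans (Setoid.symm h.choose_spec) (heq ▸ h'.choose_spec))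
    · exfalso
      have h2 : m ≤ ((emb ⟨j', fun i hi => h' ⟨i, hi⟩⟩ : {x : Fin d // m ≤ (x : ℕ)}).1 : ℕ) :=
        (emb _).2
      rw [← hjj] at h2
      simp only [Fin.coe_castLE] at h2
      omega
    · exfalso
      have h2 : m ≤ ((emb ⟨j, fun i hi => h ⟨i, hi⟩⟩ : {x : Fin d // m ≤ (x : ℕ)}).1 : ℕ) :=
        (emb _).2
      rw [hjj] at h2
      simp only [Fin.coe_castLE] at h2
      omega
    · exact congrArg Subtype.val (emb.injective (Subtype.ext hjj))
  obtain ⟨g, hg⟩ := exists_perm_extend hn u huinj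
  refine ⟨g, Setoid.ext fun a b => ?_⟩
  have key : ∀ (i : Fin m) (j : Fin n),
      g (Fin.castLE hn j) = Fin.castLE hm i ↔ r (Sum.inl i) (Sum.inr j) := by
    intro i j
    rw [hg j]
    by_cases h : ∃ i' : Fin m, r (Sum.inl i') (Sum.inr j)
    · simp only [hu, h, dif_pos]
      constructor
      · intro he
        have heq : h.choose = i := Fin.castLE_injective hm he
        exact heq ▸ h.choose_spec
      · intro hi
        rw [huniq j h i hi]
    · simp only [hu, h, dif_neg, not_false_iff]
      constructor
      · intro he
        exfalso
        have h2 : m ≤ ((emb ⟨j, fun i hi => h ⟨i, hi⟩⟩ : {x : Fin d // m ≤ (x : ℕ)}).1 : ℕ) :=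
          (emb _).2
        rw [he] at h2
        simp only [Fin.coe_castLE] at h2
        omega
      · intro hi
        exact absurd ⟨i, hi⟩ h
  rcases a with i | j <;> rcases b with i' | j'
  · show (i = i') ↔ r (Sum.inl i) (Sum.inl i')
    exact ⟨fun h => h ▸ Setoid.refl _, fun h => hr.1 i i' h⟩
  · exact key i j'
  · exact (key i' j).trans ⟨Setoid.symm, Setoid.symm⟩
  · show (j = j') ↔ r (Sum.inr j) (Sum.inr j')
    exact ⟨fun h => h ▸ Setoid.refl _, fun h => hr.2 j j' h⟩

lemma matched_iff_symm (hm : m ≤ d) (hn : n ≤ d) (g : Equiv.Perm (Fin d)) (i : Fin m) :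
    ((g.symm (Fin.castLE hm i) : Fin d) : ℕ) < n ↔
      ∃ j : Fin n, g (Fin.castLE hn j) = Fin.castLE hm i := by
  constructor
  · intro h
    refine ⟨⟨(g.symm (Fin.castLE hm i) : Fin d), h⟩, ?_⟩
    have e : (Fin.castLE hn ⟨((g.symm (Fin.castLE hm i) : Fin d) : ℕ), h⟩ : Fin d) =
        g.symm (Fin.castLE hm i) := Fin.ext rfl
    rw [e, Equiv.apply_symm_apply]
  · rintro ⟨j, hj⟩
    have e : g.symm (Fin.castLE hm i) = Fin.castLE hn j := by
      rw [Equiv.symm_apply_eq, hj]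
    rw [e]
    exact j.isLt

lemma exists_doset_rel (hm : m ≤ d) (hn : n ≤ d) {g g' : Equiv.Perm (Fin d)}
    (hsame : rSetoid hm hn g = rSetoid hm hn g') :
    ∃ h ∈ youngSubgroup (youngSetoid d m), ∃ k ∈ youngSubgroup (youngSetoid d n),
      g' = h * g * k := by
  classical
  have hmatch : ∀ (i : Fin m) (j : Fin n),
      g (Fin.castLE hn j) = Fin.castLE hm i ↔ g' (Fin.castLE hn j) = Fin.castLE hm i := by
    intro i j
    have hx : ∀ a b, rSetoid hm hn g a b ↔ rSetoid hm hn g' a b := fun a b => by rw [hsame]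
    exact hx (Sum.inl i) (Sum.inr j)
  -- value-level consequences
  have hA' : ∀ x : Fin d, (x : ℕ) < n → ((g' x : Fin d) : ℕ) < m → g x = g' x := by
    intro x hx h2
    have hcast : (Fin.castLE hn ⟨(x : ℕ), hx⟩ : Fin d) = x := Fin.ext rfl
    have hcast2 : (Fin.castLE hm ⟨((g' x : Fin d) : ℕ), h2⟩ : Fin d) = g' x := Fin.ext rfl
    have h3 : g' (Fin.castLE hn ⟨(x : ℕ), hx⟩) = Fin.castLE hm ⟨((g' x : Fin d) : ℕ), h2⟩ := by
      rw [hcast, hcast2]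
    have h4 := (hmatch _ _).mpr h3
    rw [hcast, hcast2] at h4
    exact h4
  have hA : ∀ x : Fin d, (x : ℕ) < n → ((g x : Fin d) : ℕ) < m → g' x = g x := by
    intro x hx h2
    have hcast : (Fin.castLE hn ⟨(x : ℕ), hx⟩ : Fin d) = x := Fin.ext rfl
    have hcast2 : (Fin.castLE hm ⟨((g x : Fin d) : ℕ), h2⟩ : Fin d) = g x := Fin.ext rfl
    have h3 : g (Fin.castLE hn ⟨(x : ℕ), hx⟩) = Fin.castLE hm ⟨((g x : Fin d) : ℕ), h2⟩ := by
      rw [hcast, hcast2]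
    have h4 := (hmatch _ _).mp h3
    rw [hcast, hcast2] at h4
    exact h4
  have hB : ∀ x : Fin d, (x : ℕ) < n → m ≤ ((g x : Fin d) : ℕ) → m ≤ ((g' x : Fin d) : ℕ) := by
    intro x hx h2
    by_contra h3
    push_neg at h3
    rw [hA' x hx h3] at h2
    omega
  -- unmatched transfer
  have hC : ∀ i : Fin m, (n ≤ ((g.symm (Fin.castLE hm i) : Fin d) : ℕ) ↔
      n ≤ ((g'.symm (Fin.castLE hm i) : Fin d) : ℕ)) := by
    intro i
    rw [← not_lt, ← not_lt, matched_iff_symm hm hn g i, matched_iff_symm hm hn g' i]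
    rw [not_iff_not]
    exact exists_congr fun j => hmatch i j
  set Q : Fin d → Prop := fun x => n ≤ (x : ℕ) with hQ
  -- preimages of low unmatched values stay in the tail
  have hGpre : ∀ x : {x : Fin d // Q x}, ((g' x.1 : Fin d) : ℕ) < m →
      n ≤ ((g.symm (g' x.1) : Fin d) : ℕ) := by
    intro x hx
    have hcast : (Fin.castLE hm ⟨((g' x.1 : Fin d) : ℕ), hx⟩ : Fin d) = g' x.1 := Fin.ext rfl
    have h1 : n ≤ ((g'.symm (Fin.castLE hm ⟨((g' x.1 : Fin d) : ℕ), hx⟩) : Fin d) : ℕ) := by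
      rw [hcast, Equiv.symm_apply_apply]
      exact x.2
    have h2 := (hC _).mpr h1
    rwa [hcast] at h2
  have hGpre' : ∀ x : {x : Fin d // Q x}, ((g x.1 : Fin d) : ℕ) < m →
      n ≤ ((g'.symm (g x.1) : Fin d) : ℕ) := by
    intro x hx
    have hcast : (Fin.castLE hm ⟨((g x.1 : Fin d) : ℕ), hx⟩ : Fin d) = g x.1 := Fin.ext rfl
    have h1 : n ≤ ((g.symm (Fin.castLE hm ⟨((g x.1 : Fin d) : ℕ), hx⟩) : Fin d) : ℕ) := by
      rw [hcast, Equiv.symm_apply_apply]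
      exact x.2
    have h2 := (hC _).mp h1
    rwa [hcast] at h2
  set T := {x : Fin d // Q x} with hT
  set P : T → Prop := fun x => ((g' x.1 : Fin d) : ℕ) < m with hPdef
  set P' : T → Prop := fun x => ((g x.1 : Fin d) : ℕ) < m with hP'def
  set e0 : {x : T // P x} ≃ {x : T // P' x} :=
    { toFun := fun x => ⟨⟨g.symm (g' x.1.1), hGpre x.1 x.2⟩, by
        show ((g (g.symm (g' x.1.1)) : Fin d) : ℕ) < m
        rw [Equiv.apply_symm_apply]
        exact x.2⟩
      invFun := fun y => ⟨⟨g'.symm (g y.1.1), hGpre' y.1 y.2⟩, by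
        show ((g' (g'.symm (g y.1.1)) : Fin d) : ℕ) < m
        rw [Equiv.apply_symm_apply]
        exact y.2⟩
      left_inv := fun x => by
        apply Subtype.ext
        apply Subtype.ext
        show g'.symm (g (g.symm (g' x.1.1))) = x.1.1
        rw [Equiv.apply_symm_apply, Equiv.symm_apply_apply]
      right_inv := fun y => by
        apply Subtype.ext
        apply Subtype.ext
        show g.symm (g' (g'.symm (g y.1.1))) = y.1.1
        rw [Equiv.apply_symm_apply, Equiv.symm_apply_apply] } with he0
  have hcards : Fintype.card {x : T // ¬ P x} = Fintype.card {x : T // ¬ P' x} := by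
    rw [Fintype.card_subtype_compl, Fintype.card_subtype_compl, Fintype.card_congr e0]
  set e1 : {x : T // ¬ P x} ≃ {x : T // ¬ P' x} := Fintype.equivOfCardEq hcards with he1
  set σ : Equiv.Perm T :=
    (Equiv.sumCompl P).symm.trans ((Equiv.sumCongr e0 e1).trans (Equiv.sumCompl P')) with hσ
  have hσ_prop : ∀ x : T, (youngSetoid d m) (g ((σ x) : Fin d)) (g' (x : Fin d)) := by
    intro x
    by_cases hx : P x
    · have h1 : σ x = ((e0 ⟨x, hx⟩ : {x : T // P' x}) : T) := by
        simp only [hσ, Equiv.trans_apply, Equiv.sumCompl_symm_apply_of_pos hx,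
          Equiv.sumCongr_apply, Sum.map_inl, Equiv.sumCompl_apply_inl]
      rw [h1]
      left
      show g (g.symm (g' x.1)) = g' x.1
      rw [Equiv.apply_symm_apply]
    · have h1 : σ x = ((e1 ⟨x, hx⟩ : {x : T // ¬ P' x}) : T) := by
        simp only [hσ, Equiv.trans_apply, Equiv.sumCompl_symm_apply_of_neg hx,
          Equiv.sumCongr_apply, Sum.map_inr, Equiv.sumCompl_apply_inr]
      rw [h1]
      right
      constructor
      · exact le_of_not_gt (e1 ⟨x, hx⟩).2
      · exact le_of_not_gt hx
  set k : Equiv.Perm (Fin d) := Equiv.Perm.subtypeCongr σ (Equiv.refl {x : Fin d // ¬ Q x})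
    with hk
  have hk_lo : ∀ x : Fin d, ¬ Q x → k x = x := by
    intro x hx
    rw [hk, Equiv.Perm.subtypeCongr.right_apply _ _ hx]
    rfl
  have hk_hi : ∀ (x : Fin d) (hx : Q x), k x = ((σ ⟨x, hx⟩ : T) : Fin d) := by
    intro x hx
    rw [hk, Equiv.Perm.subtypeCongr.left_apply _ _ hx]
  have hkK : k ∈ youngSubgroup (youngSetoid d n) := by
    intro x
    by_cases hx : Q x
    · right
      exact ⟨hx, by rw [hk_hi x hx]; exact (σ ⟨x, hx⟩).2⟩
    · left
      exact (hk_lo x hx).symm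
  have hkey : ∀ x : Fin d, (youngSetoid d m) (g (k x)) (g' x) := by
    intro x
    by_cases hx : Q x
    · rw [hk_hi x hx]
      exact hσ_prop ⟨x, hx⟩
    · rw [hk_lo x hx]
      have hxn : (x : ℕ) < n := not_le.mp hx
      by_cases h2 : ((g x : Fin d) : ℕ) < m
      · left
        exact (hA x hxn h2).symm
      · right
        exact ⟨le_of_not_gt h2, hB x hxn (le_of_not_gt h2)⟩
  refine ⟨g' * k⁻¹ * g⁻¹, ?_, k, hkK, by group⟩
  intro y
  have h1 := hkey (k⁻¹ (g⁻¹ y))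
  have h2 : g (k (k⁻¹ (g⁻¹ y))) = y := by
    simp only [Equiv.Perm.inv_def, Equiv.apply_symm_apply]
  rw [h2] at h1
  have h3 : (g' * k⁻¹ * g⁻¹) y = g' (k⁻¹ (g⁻¹ y)) := rfl
  rw [h3]
  exact h1

end DER

/-- For `m, n ≤ d`, the double cosets `S_p\S_d/S_q` for the Young subgroups
of the partitions `{{1},…,{m},{m+1,…,d}}` and `{{1},…,{n},{n+1,…,d}}` are in
bijection with the recollements `r` of `{1,…,m}` and `{1,…,n}` with `#r ≤ d`. -/
theorem doset_equiv_recollements (d m n : ℕ) (hm : m ≤ d) (hn : n ≤ d) :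
    Nonempty
      (DoubleCoset.Quotient ((youngSubgroup (youngSetoid d m) : Subgroup (Equiv.Perm (Fin d))) : Set (Equiv.Perm (Fin d)))
          ((youngSubgroup (youngSetoid d n) : Subgroup (Equiv.Perm (Fin d))) : Set (Equiv.Perm (Fin d))) ≃
        {r : Setoid (Fin m ⊕ Fin n) // IsRecollement r ∧ Nat.card (Quotient r) ≤ d}) := by
  refine ⟨Equiv.ofBijective (DER.toRec hm hn) ⟨?_, ?_⟩⟩
  · intro a b hab
    revert hab
    refine Quotient.inductionOn₂ a b fun x y hxy => ?_
    have h1 : DER.rSetoid hm hn x = DER.rSetoid hm hn y := congrArg Subtype.val hxy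
    obtain ⟨h, hh, k, hk, hg⟩ := DER.exists_doset_rel hm hn h1
    exact Quotient.sound (DoubleCoset.rel_iff.mpr ⟨h, hh, k, hk, hg⟩)
  · rintro ⟨r, hr, hcard⟩
    obtain ⟨g, hg⟩ := DER.exists_perm_of_rec hm hn r hr hcard
    exact ⟨DoubleCoset.mk _ _ g, Subtype.ext hg⟩
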